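/- Let f : ℝ^d → ℝ be twice continuously differentiable, convex (∇²f(x) ⪰ 0 for all x), and M-strongly self-concordant. For x, y ∈ ℝ^d set r := ‖y − x‖_{∇²f(x)}. Then (1/(1 + Mr))·∇²f(x) ⪯ ∇²f(y) ⪯ (1 + Mr)·∇²f(x). -/

import Mathlib

open Matrix

noncomputable section

abbrev Evec (d : ℕ) := EuclideanSpace ℝ (Fin d)

/-- Gradient vector: coordinates are the partial derivatives. -/
noncomputable def gradE {d : ℕ} (f : Evec d → ℝ) (x : Evec d) : Evec d :=
  WithLp.toLp 2 fun i => fderiv ℝ f x (EuclideanSpace.single i 1)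

/-- Hessian matrix: entries are the second partial derivatives. -/
noncomputable def hessE {d : ℕ} (f : Evec d → ℝ) (x : Evec d) : Matrix (Fin d) (Fin d) ℝ :=
  Matrix.of fun i j =>
    iteratedFDeriv ℝ 2 f x ![EuclideanSpace.single i 1, EuclideanSpace.single j 1]

/-- Spectral norm of a matrix (operator norm on Euclidean space). -/
noncomputable def specNorm {d : ℕ} (A : Matrix (Fin d) (Fin d) ℝ) : ℝ :=
  ‖Matrix.toEuclideanCLM (𝕜 := ℝ) A‖

/-- ‖v‖_A = √(vᵀ A v). -/
noncomputable def anorm {d : ℕ} (A : Matrix (Fin d) (Fin d) ℝ) (v : Evec d) : ℝ :=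
  Real.sqrt ((fun i => v i) ⬝ᵥ A.mulVec (fun i => v i))

/-- Matrix-vector product on Euclidean space. -/
noncomputable def mulVecE {d : ℕ} (A : Matrix (Fin d) (Fin d) ℝ) (v : Evec d) : Evec d :=
  WithLp.toLp 2 fun i => A.mulVec (fun j => v j) i

lemma anorm_sub_comm {d : ℕ} (A : Matrix (Fin d) (Fin d) ℝ) (u v : Evec d) :
    anorm A (u - v) = anorm A (v - u) := by
  unfold anorm
  have h : (fun i => (u - v) i) = -(fun i => (v - u) i) := by
    funext i; simp
  rw [h, Matrix.mulVec_neg, neg_dotProduct, dotProduct_neg, neg_neg]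

lemma psd_smul {d : ℕ} {A : Matrix (Fin d) (Fin d) ℝ} (hA : A.PosSemidef) {c : ℝ}
    (hc : 0 ≤ c) : (c • A).PosSemidef := by
  refine ⟨(by rw [Matrix.IsHermitian, Matrix.conjTranspose_smul, hA.1]; simp), fun v => ?_⟩
  exact (hA.smul hc).2 v

/-- Hessians of strongly self-concordant convex functions at nearby points
are multiplicatively close. -/
theorem stmt_2 {d : ℕ} (f : Evec d → ℝ) (M : ℝ)
    (hC2 : ContDiff ℝ 2 f)
    (hconv : ∀ x : Evec d, (hessE f x).PosSemidef)
    (hsc : ∀ x y z w : Evec d,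
      ((M * anorm (hessE f z) (y - x)) • hessE f w - (hessE f y - hessE f x)).PosSemidef)
    (x y : Evec d) :
    (hessE f y - (1 + M * anorm (hessE f x) (y - x))⁻¹ • hessE f x).PosSemidef
      ∧ ((1 + M * anorm (hessE f x) (y - x)) • hessE f x - hessE f y).PosSemidef := by
  set r : ℝ := M * anorm (hessE f x) (y - x) with hr
  set c : ℝ := 1 + r with hc
  have h2 : ((c • hessE f x - hessE f y)).PosSemidef := by
    have := hsc x y x x
    convert this using 1
    rw [hc]; module
  refine ⟨?_, h2⟩
  have h1 : (c • hessE f y - hessE f x).PosSemidef := by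
    have := hsc y x x y
    rw [anorm_sub_comm, ← hr] at this
    convert this using 1
    rw [hc]; module
  rcases le_or_gt c 0 with hcle | hcpos
  · have hinv : c⁻¹ ≤ 0 := inv_nonpos.mpr hcle
    have := (hconv y).add (psd_smul (hconv x) (neg_nonneg.mpr hinv))
    convert this using 1
    module
  · have := psd_smul h1 (le_of_lt (inv_pos.mpr hcpos))
    rw [smul_sub, smul_smul, inv_mul_cancel₀ (ne_of_gt hcpos), one_smul] at this
    exact this

end
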